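/- (Key Lemma for analytic arcs, direction-matching part) Let h : ℝⁿ → ℝⁿ be a bi-Lipschitz bijection with h(0) = 0, and let γ₁, γ₂ ⊆ ℝⁿ be sets with 0 ∈ closure(γ₁ \ {0}) ∩ closure(γ₂ \ {0}) such that there exist d > 1, C > 0 with γ₁ ⊆ ST_d(γ₂;C) and γ₂ ⊆ ST_d(γ₁;C) near 0. Then D(h(γ₁)) = D(h(γ₂)); moreover for any sequence a_m ∈ h(γ₁) with a_m → 0 and a_m/‖a_m‖ → a, there exist b_m ∈ h(γ₂) with b_m → 0 and b_m/‖b_m‖ → a. -/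

import Mathlib

open Filter Metric Topology MeasureTheory

noncomputable section

abbrev E (n : ℕ) := EuclideanSpace ℝ (Fin n)

/-- Direction set of `A` at the origin. -/
def Dir (n : ℕ) (A : Set (E n)) : Set (E n) :=
  {a | ‖a‖ = 1 ∧ ∃ x : ℕ → E n, (∀ i, x i ∈ A \ {0}) ∧
    Tendsto x atTop (nhds (0 : E n)) ∧
    Tendsto (fun i => (‖x i‖)⁻¹ • x i) atTop (nhds a)}

/-- Sea-tangle neighbourhood of degree `d` and width `C`. -/
def STg (n : ℕ) (d C : ℝ) (A : Set (E n)) : Set (E n) :=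
  {x | Metric.infDist x A ≤ C * ‖x‖ ^ d}

/-- Cone over the direction set (real tangent cone). -/
def LD (n : ℕ) (A : Set (E n)) : Set (E n) :=
  {x | ∃ a ∈ Dir n A, ∃ t : ℝ, 0 ≤ t ∧ x = t • a}

/-- Sequence selection property. -/
def SSP (n : ℕ) (S : Set (E n)) : Prop :=
  ∀ a : ℕ → E n, (∀ m, a m ≠ 0) → Tendsto a atTop (nhds (0 : E n)) →
    (∃ L ∈ Dir n S, Tendsto (fun m => (‖a m‖)⁻¹ • a m) atTop (nhds L)) →
    ∀ ε > (0:ℝ), ∃ b : ℕ → E n, (∀ m, b m ∈ S) ∧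
      ∀ᶠ m in atTop, ‖a m - b m‖ ≤ ε * min ‖a m‖ ‖b m‖

/-- ST-equivalence of set-germs at the origin. -/
def STEquiv (n : ℕ) (A B : Set (E n)) : Prop :=
  ∃ d₁ > (1:ℝ), ∃ C₁ > (0:ℝ), ∃ d₂ > (1:ℝ), ∃ C₂ > (0:ℝ), ∃ ε > (0:ℝ),
    B ∩ ball (0 : E n) ε ⊆ STg n d₁ C₁ A ∧ A ∩ ball (0 : E n) ε ⊆ STg n d₂ C₂ B

lemma unit_diff {n : ℕ} (u v : E n) (hu : u ≠ 0) (hv : v ≠ 0) :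
    ‖‖u‖⁻¹ • u - ‖v‖⁻¹ • v‖ ≤ 2 * ‖u - v‖ / ‖u‖ := by
  have hu' : (0:ℝ) < ‖u‖ := norm_pos_iff.mpr hu
  have hv' : (0:ℝ) < ‖v‖ := norm_pos_iff.mpr hv
  have key : ‖u‖⁻¹ • u - ‖v‖⁻¹ • v = ‖u‖⁻¹ • (u - v) + (‖u‖⁻¹ - ‖v‖⁻¹) • v := by
    module
  rw [key]
  have h1 : ‖‖u‖⁻¹ • (u - v)‖ = ‖u‖⁻¹ * ‖u - v‖ := by
    rw [norm_smul, Real.norm_eq_abs, abs_inv, abs_norm]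
  have h2 : ‖(‖u‖⁻¹ - ‖v‖⁻¹) • v‖ = |‖u‖⁻¹ - ‖v‖⁻¹| * ‖v‖ := by
    rw [norm_smul, Real.norm_eq_abs]
  have h3 : |‖u‖⁻¹ - ‖v‖⁻¹| * ‖v‖ ≤ ‖u - v‖ / ‖u‖ := by
    have heq : ‖u‖⁻¹ - ‖v‖⁻¹ = (‖v‖ - ‖u‖) / (‖u‖ * ‖v‖) := by field_simp
    have habs : |‖v‖ - ‖u‖| ≤ ‖u - v‖ := by
      have := abs_norm_sub_norm_le v u
      rwa [show v - u = -(u - v) by abel, norm_neg] at this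
    have heq2 : |(‖v‖ - ‖u‖) / (‖u‖ * ‖v‖)| * ‖v‖ = |‖v‖ - ‖u‖| / ‖u‖ := by
      rw [abs_div, abs_of_pos (mul_pos hu' hv')]
      field_simp
    rw [heq, heq2]
    gcongr
  calc ‖‖u‖⁻¹ • (u - v) + (‖u‖⁻¹ - ‖v‖⁻¹) • v‖
      ≤ ‖‖u‖⁻¹ • (u - v)‖ + ‖(‖u‖⁻¹ - ‖v‖⁻¹) • v‖ := norm_add_le _ _
    _ ≤ ‖u - v‖ / ‖u‖ + ‖u - v‖ / ‖u‖ := by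
        rw [h1, h2, inv_mul_eq_div]
        exact add_le_add le_rfl h3
    _ = 2 * ‖u - v‖ / ‖u‖ := by ring

lemma key_lemma {n : ℕ} (h : E n → E n) (hinj : Function.Injective h) (hh0 : h 0 = 0)
    (K₁ K₂ : ℝ) (hK₁ : 0 < K₁) (hK₂ : 0 < K₂)
    (hlip : ∀ x y : E n, K₁ * ‖x - y‖ ≤ ‖h x - h y‖ ∧ ‖h x - h y‖ ≤ K₂ * ‖x - y‖)
    (γ₁ γ₂ : Set (E n)) (h2 : (0 : E n) ∈ closure (γ₂ \ {0}))
    (d C ε : ℝ) (hd : 1 < d) (hC : 0 < C) (hε : 0 < ε)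
    (hs1 : γ₁ ∩ ball (0 : E n) ε ⊆ STg n d C γ₂) :
    ∀ (a : ℕ → E n) (α : E n), (∀ m, a m ∈ h '' γ₁) → (∀ m, a m ≠ 0) →
      Tendsto a atTop (nhds (0 : E n)) →
      Tendsto (fun m => (‖a m‖)⁻¹ • a m) atTop (nhds α) →
      ∃ b : ℕ → E n, (∀ m, b m ∈ h '' γ₂) ∧ (∀ m, b m ≠ 0) ∧
        Tendsto b atTop (nhds (0 : E n)) ∧
        Tendsto (fun m => (‖b m‖)⁻¹ • b m) atTop (nhds α) := by
  intro a α hmem hne ha0 haα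
  have hd0 : (0:ℝ) < d := by linarith
  -- a fixed nonzero point of γ₂
  obtain ⟨z, hzγ, hz0'⟩ : (γ₂ \ {0}).Nonempty := by
    rcases Set.eq_empty_or_nonempty (γ₂ \ {0}) with he | hne'
    · rw [he, closure_empty] at h2; exact absurd h2 (Set.notMem_empty 0)
    · exact hne'
  have hz0 : z ≠ 0 := by simpa using hz0'
  have hγ₂ne : γ₂.Nonempty := ⟨z, hzγ⟩
  -- choose preimages
  choose x hx1 hx2 using hmem
  have hx0 : ∀ m, x m ≠ 0 := by
    intro m h0
    exact hne m (by rw [← hx2 m, h0, hh0])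
  have hxpos : ∀ m, (0:ℝ) < ‖x m‖ := fun m => norm_pos_iff.mpr (hx0 m)
  have hapos : ∀ m, (0:ℝ) < ‖a m‖ := fun m => norm_pos_iff.mpr (hne m)
  have hxa : ∀ m, ‖x m‖ ≤ K₁⁻¹ * ‖a m‖ := by
    intro m
    have := (hlip (x m) 0).1
    rw [hh0, sub_zero, sub_zero, hx2 m] at this
    calc ‖x m‖ = K₁⁻¹ * (K₁ * ‖x m‖) := by field_simp
      _ ≤ K₁⁻¹ * ‖a m‖ := mul_le_mul_of_nonneg_left this (inv_nonneg.mpr hK₁.le)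
  have hna : Tendsto (fun m => ‖a m‖) atTop (nhds 0) := by
    simpa using ha0.norm
  have hnx : Tendsto (fun m => ‖x m‖) atTop (nhds 0) := by
    have hg : Tendsto (fun m => K₁⁻¹ * ‖a m‖) atTop (nhds 0) := by
      simpa using hna.const_mul K₁⁻¹
    exact squeeze_zero (fun m => norm_nonneg _) hxa hg
  -- rpow tendsto helper
  have hrpow : ∀ (f : ℕ → ℝ), Tendsto f atTop (nhds 0) →
      Tendsto (fun m => (f m) ^ (d - 1)) atTop (nhds 0) := by
    intro f hf
    have hc : ContinuousAt (fun t : ℝ => t ^ (d-1)) 0 :=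
      Real.continuousAt_rpow_const 0 (d-1) (Or.inr (by linarith))
    have := hc.tendsto.comp hf
    rwa [Real.zero_rpow (by linarith : d - 1 ≠ 0)] at this
  -- the "good" condition holds eventually
  have hQ : ∀ᶠ m in atTop, ‖x m‖ < ε ∧ 2*C*‖x m‖^d < ‖x m‖ := by
    have h1 : ∀ᶠ m in atTop, ‖x m‖ < ε := hnx.eventually (eventually_lt_nhds hε)
    have h2' : Tendsto (fun m => 2*C*‖x m‖^(d-1)) atTop (nhds 0) := by
      simpa using (hrpow _ hnx).const_mul (2*C)
    have h3 : ∀ᶠ m in atTop, 2*C*‖x m‖^(d-1) < 1 :=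
      h2'.eventually (eventually_lt_nhds one_pos)
    filter_upwards [h1, h3] with m hm1 hm3
    refine ⟨hm1, ?_⟩
    have hsplit : ‖x m‖^d = ‖x m‖^(d-1) * ‖x m‖ := by
      rw [show d = (d-1)+1 by ring, Real.rpow_add (hxpos m), Real.rpow_one]
      ring_nf
    rw [hsplit]
    calc 2*C*(‖x m‖^(d-1) * ‖x m‖) = (2*C*‖x m‖^(d-1)) * ‖x m‖ := by ring
      _ < 1 * ‖x m‖ := by exact mul_lt_mul_of_pos_right hm3 (hxpos m)
      _ = ‖x m‖ := one_mul _
  -- choose approximating points in γ₂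
  have hy : ∀ m, ∃ y, y ∈ γ₂ ∧ y ≠ 0 ∧
      ((‖x m‖ < ε ∧ 2*C*‖x m‖^d < ‖x m‖) → dist (x m) y < 2*C*‖x m‖^d) := by
    intro m
    by_cases hm : ‖x m‖ < ε ∧ 2*C*‖x m‖^d < ‖x m‖
    · have hxball : x m ∈ γ₁ ∩ ball 0 ε := ⟨hx1 m, by simpa [mem_ball, dist_zero_right] using hm.1⟩
      have hinf : Metric.infDist (x m) γ₂ ≤ C * ‖x m‖^d := hs1 hxball
      have hpow : (0:ℝ) < ‖x m‖ ^ d := Real.rpow_pos_of_pos (hxpos m) d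
      have hlt : Metric.infDist (x m) γ₂ < 2*C*‖x m‖^d := by nlinarith
      obtain ⟨y, hyγ, hydist⟩ := (Metric.infDist_lt_iff hγ₂ne).mp hlt
      have hy0 : y ≠ 0 := by
        intro h0
        rw [h0, dist_zero_right] at hydist
        exact absurd (hydist.trans hm.2) (lt_irrefl _)
      exact ⟨y, hyγ, hy0, fun _ => hydist⟩
    · exact ⟨z, hzγ, hz0, fun hq => absurd hq hm⟩
  choose y hy1 hy2 hy3 using hy
  have hb0 : ∀ m, h (y m) ≠ 0 := by
    intro m h0
    exact hy2 m (hinj (by rw [h0, hh0]))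
  have hbound : ∀ᶠ m in atTop,
      ‖a m - h (y m)‖ ≤ ((2*C*K₂*K₁⁻¹^d) * ‖a m‖^(d-1)) * ‖a m‖ := by
    filter_upwards [hQ] with m hm
    have e1 : ‖a m - h (y m)‖ ≤ K₂ * ‖x m - y m‖ := by
      rw [← hx2 m]; exact (hlip _ _).2
    have e2 : ‖x m - y m‖ ≤ 2*C*‖x m‖^d := by
      rw [← dist_eq_norm]; exact (hy3 m hm).le
    have e3 : ‖x m‖^d ≤ K₁⁻¹^d * ‖a m‖^d := by
      calc ‖x m‖^d ≤ (K₁⁻¹*‖a m‖)^d :=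
            Real.rpow_le_rpow (norm_nonneg _) (hxa m) hd0.le
        _ = K₁⁻¹^d * ‖a m‖^d := Real.mul_rpow (inv_nonneg.mpr hK₁.le) (norm_nonneg _)
    have e4 : ‖a m‖^d = ‖a m‖^(d-1) * ‖a m‖ := by
      rw [show d=(d-1)+1 by ring, Real.rpow_add (hapos m), Real.rpow_one]
      ring_nf
    calc ‖a m - h (y m)‖ ≤ K₂ * ‖x m - y m‖ := e1
      _ ≤ K₂ * (2*C*‖x m‖^d) := by gcongr
      _ ≤ K₂ * (2*C*(K₁⁻¹^d * ‖a m‖^d)) := by gcongr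
      _ = ((2*C*K₂*K₁⁻¹^d) * ‖a m‖^(d-1)) * ‖a m‖ := by rw [e4]; ring
  have hEc : Tendsto (fun m => (2*C*K₂*K₁⁻¹^d) * ‖a m‖^(d-1)) atTop (nhds 0) := by
    simpa using (hrpow _ hna).const_mul (2*C*K₂*K₁⁻¹^d)
  refine ⟨fun m => h (y m), fun m => ⟨y m, hy1 m, rfl⟩, hb0, ?_, ?_⟩
  · have hev : ∀ᶠ m in atTop,
        ‖h (y m)‖ ≤ ((2*C*K₂*K₁⁻¹^d) * ‖a m‖^(d-1)) * ‖a m‖ + ‖a m‖ := by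
      filter_upwards [hbound] with m hm
      calc ‖h (y m)‖ = ‖(h (y m) - a m) + a m‖ := by rw [sub_add_cancel]
        _ ≤ ‖h (y m) - a m‖ + ‖a m‖ := norm_add_le _ _
        _ = ‖a m - h (y m)‖ + ‖a m‖ := by rw [norm_sub_rev]
        _ ≤ ((2*C*K₂*K₁⁻¹^d) * ‖a m‖^(d-1)) * ‖a m‖ + ‖a m‖ := by linarith
    exact squeeze_zero_norm' hev (by simpa using (hEc.mul hna).add hna)
  · have hdiff : Tendsto
        (fun m => ‖h (y m)‖⁻¹ • h (y m) - ‖a m‖⁻¹ • a m) atTop (nhds 0) := by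
      have hev2 : ∀ᶠ m in atTop, ‖‖h (y m)‖⁻¹ • h (y m) - ‖a m‖⁻¹ • a m‖ ≤
          2 * ((2*C*K₂*K₁⁻¹^d) * ‖a m‖^(d-1)) := by
        filter_upwards [hbound] with m hm
        calc ‖‖h (y m)‖⁻¹ • h (y m) - ‖a m‖⁻¹ • a m‖
            = ‖‖a m‖⁻¹ • a m - ‖h (y m)‖⁻¹ • h (y m)‖ := norm_sub_rev _ _
          _ ≤ 2 * ‖a m - h (y m)‖ / ‖a m‖ := unit_diff _ _ (hne m) (hb0 m)
          _ ≤ 2 * ((2*C*K₂*K₁⁻¹^d) * ‖a m‖^(d-1)) := by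
              rw [div_le_iff₀ (hapos m)]
              nlinarith [hapos m]
      exact squeeze_zero_norm' hev2 (by simpa using hEc.const_mul 2)
    have h' := hdiff.add haα
    rw [zero_add] at h'
    simpa only [sub_add_cancel] using h'

theorem stmt18 (n : ℕ) (h : E n → E n) (hbij : Function.Bijective h) (hh0 : h 0 = 0)
    (K₁ K₂ : ℝ) (hK₁ : 0 < K₁) (hK : K₁ ≤ K₂)
    (hlip : ∀ x y : E n, K₁ * ‖x - y‖ ≤ ‖h x - h y‖ ∧ ‖h x - h y‖ ≤ K₂ * ‖x - y‖)
    (γ₁ γ₂ : Set (E n)) (h1 : (0 : E n) ∈ closure (γ₁ \ {0}))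
    (h2 : (0 : E n) ∈ closure (γ₂ \ {0}))
    (d C ε : ℝ) (hd : 1 < d) (hC : 0 < C) (hε : 0 < ε)
    (hs1 : γ₁ ∩ ball (0 : E n) ε ⊆ STg n d C γ₂)
    (hs2 : γ₂ ∩ ball (0 : E n) ε ⊆ STg n d C γ₁) :
    Dir n (h '' γ₁) = Dir n (h '' γ₂) ∧
    ∀ (a : ℕ → E n) (α : E n), (∀ m, a m ∈ h '' γ₁) → (∀ m, a m ≠ 0) →
      Tendsto a atTop (nhds (0 : E n)) →
      Tendsto (fun m => (‖a m‖)⁻¹ • a m) atTop (nhds α) →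
      ∃ b : ℕ → E n, (∀ m, b m ∈ h '' γ₂) ∧ (∀ m, b m ≠ 0) ∧
        Tendsto b atTop (nhds (0 : E n)) ∧
        Tendsto (fun m => (‖b m‖)⁻¹ • b m) atTop (nhds α) := by
  have hinj := hbij.injective
  have hK₂ : (0:ℝ) < K₂ := lt_of_lt_of_le hK₁ hK
  constructor
  · ext α
    simp only [Dir, Set.mem_setOf_eq]
    constructor
    · rintro ⟨hα, w, hw, hw0, hwα⟩
      have hwm : ∀ i, w i ∈ h '' γ₁ := fun i => (hw i).1
      have hwn : ∀ i, w i ≠ 0 := fun i => by simpa using (hw i).2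
      obtain ⟨b, hb1, hb2, hb3, hb4⟩ :=
        key_lemma h hinj hh0 K₁ K₂ hK₁ hK₂ hlip γ₁ γ₂ h2 d C ε hd hC hε hs1
          w α hwm hwn hw0 hwα
      exact ⟨hα, b, fun i => ⟨hb1 i, by simpa using hb2 i⟩, hb3, hb4⟩
    · rintro ⟨hα, w, hw, hw0, hwα⟩
      have hwm : ∀ i, w i ∈ h '' γ₂ := fun i => (hw i).1
      have hwn : ∀ i, w i ≠ 0 := fun i => by simpa using (hw i).2
      obtain ⟨b, hb1, hb2, hb3, hb4⟩ :=
        key_lemma h hinj hh0 K₁ K₂ hK₁ hK₂ hlip γ₂ γ₁ h1 d C ε hd hC hε hs2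
          w α hwm hwn hw0 hwα
      exact ⟨hα, b, fun i => ⟨hb1 i, by simpa using hb2 i⟩, hb3, hb4⟩
  · intro a α hmem hne ha0 haα
    exact key_lemma h hinj hh0 K₁ K₂ hK₁ hK₂ hlip γ₁ γ₂ h2 d C ε hd hC hε hs1
      a α hmem hne ha0 haα
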